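/- Let n ≥ 1, α > 0, μ > 0, L ≥ 0, let f : ℝⁿ → ℝ be L-smooth, and let p ∈ ℝⁿ and v ∈ ℝⁿ with ‖v‖ = α. Then |⟨∇f(p), v⟩ − (1/(2μ)) ∫_{−μ}^{μ} ⟨∇f(p + t•v), v⟩ dt| ≤ L·α²·μ/2. -/

import Mathlib

open MeasureTheory

lemma int_abs_aux (μ : ℝ) (hμ : 0 ≤ μ) : (∫ t in (-μ)..μ, |t|) = μ ^ 2 := by
  have hi : ∀ a b : ℝ, IntervalIntegrable (fun t : ℝ => |t|) volume a b :=
    fun a b => continuous_abs.intervalIntegrable a b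
  rw [← intervalIntegral.integral_add_adjacent_intervals (hi (-μ) 0) (hi 0 μ)]
  have h1 : (∫ t in (-μ)..(0:ℝ), |t|) = ∫ t in (-μ)..(0:ℝ), -t := by
    apply intervalIntegral.integral_congr
    intro t ht
    rw [Set.uIcc_of_le (by linarith)] at ht
    exact abs_of_nonpos ht.2
  have h2 : (∫ t in (0:ℝ)..μ, |t|) = ∫ t in (0:ℝ)..μ, t := by
    apply intervalIntegral.integral_congr
    intro t ht
    rw [Set.uIcc_of_le hμ] at ht
    exact abs_of_nonneg ht.1
  rw [h1, h2, intervalIntegral.integral_neg, integral_id, integral_id]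
  ring

/-- For an `L`-smooth `f : ℝⁿ → ℝ` and `‖v‖ = α`, the directional
derivative at `p` differs from its average along the segment from `p − μv` to `p + μv`
by at most `Lα²μ/2`. -/
theorem gw_directional_average_error
    (n : ℕ) (hn : 1 ≤ n) (α μ L : ℝ) (hα : 0 < α) (hμ : 0 < μ) (hL : 0 ≤ L)
    (f : EuclideanSpace ℝ (Fin n) → ℝ)
    (hf_diff : Differentiable ℝ f)
    (hf_smooth : ∀ x y, ‖gradient f x - gradient f y‖ ≤ L * ‖x - y‖)
    (p v : EuclideanSpace ℝ (Fin n)) (hv : ‖v‖ = α) :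
    |(inner ℝ (gradient f p) v : ℝ) -
        (1 / (2 * μ)) * ∫ t in (-μ)..μ, (inner ℝ (gradient f (p + t • v)) v : ℝ)|
      ≤ L * α ^ 2 * μ / 2 := by
  set c : ℝ := inner ℝ (gradient f p) v with hc
  have hgrad_cont : Continuous (gradient f) := by
    have hlip : LipschitzWith (Real.toNNReal L) (gradient f) := by
      apply LipschitzWith.of_dist_le_mul
      intro x y
      rw [dist_eq_norm, dist_eq_norm]
      calc ‖gradient f x - gradient f y‖ ≤ L * ‖x - y‖ := hf_smooth x y
        _ ≤ (Real.toNNReal L) * ‖x - y‖ := by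
            apply mul_le_mul_of_nonneg_right _ (norm_nonneg _)
            exact (Real.le_coe_toNNReal L)
    exact hlip.continuous
  have hg_cont : Continuous (fun t : ℝ => (inner ℝ (gradient f (p + t • v)) v : ℝ)) := by
    apply Continuous.inner
    · exact hgrad_cont.comp (by continuity)
    · exact continuous_const
  have hInt : IntervalIntegrable (fun t : ℝ => (inner ℝ (gradient f (p + t • v)) v : ℝ))
      volume (-μ) μ := hg_cont.intervalIntegrable _ _
  have key : ∀ t : ℝ, |c - (inner ℝ (gradient f (p + t • v)) v : ℝ)| ≤ L * α ^ 2 * |t| := by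
    intro t
    have h1 : c - (inner ℝ (gradient f (p + t • v)) v : ℝ) =
        inner ℝ (gradient f p - gradient f (p + t • v)) v := by
      rw [inner_sub_left]
    rw [h1]
    calc |(inner ℝ (gradient f p - gradient f (p + t • v)) v : ℝ)|
        ≤ ‖gradient f p - gradient f (p + t • v)‖ * ‖v‖ := abs_real_inner_le_norm _ _
      _ ≤ (L * ‖p - (p + t • v)‖) * α := by
          rw [hv]; exact mul_le_mul_of_nonneg_right (hf_smooth _ _) (le_of_lt hα)
      _ = L * α ^ 2 * |t| := by
          have : p - (p + t • v) = -(t • v) := by abel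
          rw [this, norm_neg, norm_smul, Real.norm_eq_abs, hv]
          ring
  have hrw : c - (1 / (2 * μ)) * ∫ t in (-μ)..μ, (inner ℝ (gradient f (p + t • v)) v : ℝ)
      = (1 / (2 * μ)) * ∫ t in (-μ)..μ,
          (c - (inner ℝ (gradient f (p + t • v)) v : ℝ)) := by
    rw [intervalIntegral.integral_sub (intervalIntegrable_const) hInt,
      intervalIntegral.integral_const]
    simp only [smul_eq_mul]
    field_simp
    ring
  rw [hrw, abs_mul]
  have hμ2 : |1 / (2 * μ)| = 1 / (2 * μ) := abs_of_pos (by positivity)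
  rw [hμ2]
  have hbound : |∫ t in (-μ)..μ, (c - (inner ℝ (gradient f (p + t • v)) v : ℝ))|
      ≤ L * α ^ 2 * μ ^ 2 := by
    have habs : |∫ t in (-μ)..μ, (c - (inner ℝ (gradient f (p + t • v)) v : ℝ))|
        ≤ ∫ t in (-μ)..μ, |c - (inner ℝ (gradient f (p + t • v)) v : ℝ)| :=
      intervalIntegral.abs_integral_le_integral_abs (by linarith)
    have hmono : (∫ t in (-μ)..μ, |c - (inner ℝ (gradient f (p + t • v)) v : ℝ)|)
        ≤ ∫ t in (-μ)..μ, L * α ^ 2 * |t| := by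
      apply intervalIntegral.integral_mono_on (by linarith)
      · exact ((continuous_const.sub hg_cont).abs).intervalIntegrable _ _
      · exact ((continuous_const.mul continuous_abs)).intervalIntegrable _ _
      · intro t _; exact key t
    have hcalc : (∫ t in (-μ)..μ, L * α ^ 2 * |t|) = L * α ^ 2 * μ ^ 2 := by
      rw [intervalIntegral.integral_const_mul, int_abs_aux μ (le_of_lt hμ)]
    linarith
  calc (1 / (2 * μ)) * |∫ t in (-μ)..μ, (c - (inner ℝ (gradient f (p + t • v)) v : ℝ))|
      ≤ (1 / (2 * μ)) * (L * α ^ 2 * μ ^ 2) := by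
        apply mul_le_mul_of_nonneg_left hbound (by positivity)
    _ = L * α ^ 2 * μ / 2 := by field_simp
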